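/- Let A be the 2×2 matrix with entries a₁₁ = a₁₂ = a₂₂ = 1 and a₂₁ = 0, and let S_A : M₂(ℂ) → M₂(ℂ) be the Schur (entrywise) multiplication map X ↦ A ∘ X. Then the operator norm of S_A (with respect to the operator norm on M₂(ℂ)) equals 2/√3. -/

import Mathlib

open scoped Matrix.Norms.L2Operator

noncomputable def myc : ℝ := Real.sqrt 2 / Real.sqrt 3
noncomputable def mys : ℝ := 1 / Real.sqrt 3

lemma myc_sq : myc^2 = 2/3 := by
  rw [myc, div_pow, Real.sq_sqrt (by norm_num), Real.sq_sqrt (by norm_num)]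
lemma mys_sq : mys^2 = 1/3 := by
  rw [mys, div_pow, Real.sq_sqrt (by norm_num)]; norm_num
lemma myc_pos : 0 < myc := by rw [myc]; positivity
lemma mys_pos : 0 < mys := by rw [mys]; positivity
lemma mycs : myc * mys * Real.sqrt 2 = 2/3 := by
  have h2 : Real.sqrt 2 * Real.sqrt 2 = 2 := Real.mul_self_sqrt (by norm_num)
  have h3 : Real.sqrt 3 * Real.sqrt 3 = 3 := Real.mul_self_sqrt (by norm_num)
  have h3p : (0:ℝ) < Real.sqrt 3 := by positivity
  rw [myc, mys]
  field_simp
  linarith [h2, h3]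

lemma sqrt43 : Real.sqrt (4/3) = 2 / Real.sqrt 3 := by
  rw [Real.sqrt_div (by norm_num : (0:ℝ) ≤ 4), show (4:ℝ) = 2^2 by norm_num,
    Real.sqrt_sq (by norm_num)]

/-- Upper bound: any matrix `!![a,b;0,d]` with row/column constraints has norm `≤ 2/√3`. -/
lemma key (a b d : ℂ) (h1 : ‖a‖^2 + ‖b‖^2 ≤ 1) (h2 : ‖b‖^2 + ‖d‖^2 ≤ 1) :
    ‖(!![a, b; 0, d] : Matrix (Fin 2) (Fin 2) ℂ)‖ ≤ 2 / Real.sqrt 3 := by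
  rw [Matrix.l2_opNorm_def]
  apply ContinuousLinearMap.opNorm_le_bound _ (by positivity)
  intro v
  show ‖(EuclideanSpace.equiv (Fin 2) ℂ).symm ((!![a, b; 0, d]).mulVec v)‖ ≤ _
  have hmv : (!![a, b; 0, d]).mulVec v = ![a * v 0 + b * v 1, d * v 1] := by
    ext i
    fin_cases i <;> simp [Matrix.mulVec, dotProduct, Fin.sum_univ_two]
  rw [hmv]
  have hL : ‖(EuclideanSpace.equiv (Fin 2) ℂ).symm ![a * v 0 + b * v 1, d * v 1]‖
      = Real.sqrt (‖a * v 0 + b * v 1‖^2 + ‖d * v 1‖^2) := by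
    rw [EuclideanSpace.norm_eq]; simp [Fin.sum_univ_two]
  have hR : ‖v‖ = Real.sqrt (‖v 0‖^2 + ‖v 1‖^2) := by
    rw [EuclideanSpace.norm_eq]; simp [Fin.sum_univ_two]
  rw [hL, hR, show (2 / Real.sqrt 3) = Real.sqrt (4/3) from sqrt43.symm,
    ← Real.sqrt_mul (by norm_num)]
  apply Real.sqrt_le_sqrt
  have htri : ‖a * v 0 + b * v 1‖ ≤ ‖a‖ * ‖v 0‖ + ‖b‖ * ‖v 1‖ := by
    calc ‖a * v 0 + b * v 1‖ ≤ ‖a * v 0‖ + ‖b * v 1‖ := norm_add_le _ _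
      _ = ‖a‖ * ‖v 0‖ + ‖b‖ * ‖v 1‖ := by rw [norm_mul, norm_mul]
  have h4 : ‖a * v 0 + b * v 1‖^2 ≤ (‖a‖ * ‖v 0‖ + ‖b‖ * ‖v 1‖)^2 := by
    apply sq_le_sq' _ htri
    have := norm_nonneg (a * v 0 + b * v 1)
    nlinarith [norm_nonneg a, norm_nonneg b, norm_nonneg (v 0), norm_nonneg (v 1)]
  rw [norm_mul]
  set α := ‖a‖; set β := ‖b‖; set δ := ‖d‖; set Xx := ‖v 0‖; set Y := ‖v 1‖
  have ha : 0 ≤ α := norm_nonneg a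
  have hb : 0 ≤ β := norm_nonneg b
  have h3 : (0:ℝ) ≤ 4 - 3*α^2 := by nlinarith [sq_nonneg β]
  have core : (α*Xx + β*Y)^2 + δ^2*Y^2 ≤ 4/3*(Xx^2+Y^2) := by
    nlinarith [sq_nonneg ((4-3*α^2)*Xx - 3*α*β*Y), mul_nonneg (sq_nonneg (3*α^2-2)) (sq_nonneg Y),
      mul_nonneg (mul_nonneg (sq_nonneg α) (by linarith : (0:ℝ) ≤ 1 - α^2 - β^2)) (sq_nonneg Y),
      mul_nonneg (mul_nonneg h3 (by linarith : (0:ℝ) ≤ 1 - β^2 - δ^2)) (sq_nonneg Y), h3]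
  calc ‖a * v 0 + b * v 1‖^2 + (δ*Y)^2 ≤ (α*Xx + β*Y)^2 + δ^2*Y^2 := by nlinarith [h4]
    _ ≤ 4/3*(Xx^2+Y^2) := core

lemma col_bound (X : Matrix (Fin 2) (Fin 2) ℂ) (j : Fin 2) :
    ‖X 0 j‖^2 + ‖X 1 j‖^2 ≤ ‖X‖^2 := by
  have h := Matrix.l2_opNorm_mulVec X ((EuclideanSpace.equiv (Fin 2) ℂ).symm (Pi.single j 1))
  have hv : ‖(EuclideanSpace.equiv (Fin 2) ℂ).symm (Pi.single j (1:ℂ))‖ = 1 := by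
    rw [EuclideanSpace.norm_eq]
    fin_cases j <;> simp [Fin.sum_univ_two, Pi.single_apply]
  have hmv : X.mulVec ((EuclideanSpace.equiv (Fin 2) ℂ).symm (Pi.single j 1)) = fun i => X i j := by
    ext i
    simp [Matrix.mulVec, dotProduct, Fin.sum_univ_two, Pi.single_apply]
  rw [hmv, hv, mul_one] at h
  have h2 : Real.sqrt (‖X 0 j‖^2 + ‖X 1 j‖^2) ≤ ‖X‖ := by
    rw [EuclideanSpace.norm_eq] at h
    simpa [Fin.sum_univ_two] using h
  calc ‖X 0 j‖^2 + ‖X 1 j‖^2 = Real.sqrt (‖X 0 j‖^2 + ‖X 1 j‖^2)^2 := by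
        rw [Real.sq_sqrt]; positivity
    _ ≤ ‖X‖^2 := by
        have := norm_nonneg X
        nlinarith [Real.sqrt_nonneg (‖X 0 j‖^2 + ‖X 1 j‖^2)]

lemma row_bound (X : Matrix (Fin 2) (Fin 2) ℂ) (i : Fin 2) :
    ‖X i 0‖^2 + ‖X i 1‖^2 ≤ ‖X‖^2 := by
  have h := col_bound X.conjTranspose i
  rw [Matrix.l2_opNorm_conjTranspose] at h
  simpa [Matrix.conjTranspose_apply] using h

/-- The hadamard product with `!![1,1;0,1]` is the triangular truncation. -/
lemma hadamard_eq (X : Matrix (Fin 2) (Fin 2) ℂ) :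
    Matrix.hadamard (!![1, 1; 0, 1] : Matrix (Fin 2) (Fin 2) ℂ) X
      = !![X 0 0, X 0 1; 0, X 1 1] := by
  ext i j
  fin_cases i <;> fin_cases j <;> simp [Matrix.hadamard]

/-- Upper bound for all members of the set. -/
lemma upper (X : Matrix (Fin 2) (Fin 2) ℂ) (hX : ‖X‖ ≤ 1) :
    ‖Matrix.hadamard (!![1, 1; 0, 1] : Matrix (Fin 2) (Fin 2) ℂ) X‖ ≤ 2 / Real.sqrt 3 := by
  rw [hadamard_eq]
  have hX2 : ‖X‖^2 ≤ 1 := by nlinarith [norm_nonneg X]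
  exact key _ _ _ (le_trans (row_bound X 0) hX2) (le_trans (col_bound X 1) hX2)

noncomputable def X₀ : Matrix (Fin 2) (Fin 2) ℂ := !![(myc:ℂ), -(mys:ℂ); (mys:ℂ), (myc:ℂ)]

lemma X₀_unitary : X₀.conjTranspose * X₀ = 1 := by
  ext i j
  fin_cases i <;> fin_cases j <;>
    simp [X₀, Matrix.mul_apply, Fin.sum_univ_two, Matrix.conjTranspose_apply,
      Matrix.one_apply, Complex.ext_iff] <;> nlinarith [myc_sq, mys_sq]

lemma norm_one_matrix : ‖(1 : Matrix (Fin 2) (Fin 2) ℂ)‖ = 1 := by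
  rw [Matrix.cstar_norm_def, map_one]
  exact ContinuousLinearMap.norm_id

lemma X₀_norm : ‖X₀‖ ≤ 1 := by
  have h := Matrix.l2_opNorm_conjTranspose_mul_self X₀
  rw [X₀_unitary, norm_one_matrix] at h
  nlinarith [norm_nonneg X₀]

noncomputable def M₀ : Matrix (Fin 2) (Fin 2) ℂ := !![(myc:ℂ), -(mys:ℂ); 0, (myc:ℂ)]

lemma hadamard_X₀ :
    Matrix.hadamard (!![1, 1; 0, 1] : Matrix (Fin 2) (Fin 2) ℂ) X₀ = M₀ := by
  rw [hadamard_eq]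
  ext i j
  fin_cases i <;> fin_cases j <;> simp [X₀, M₀]

lemma M₀_norm : ‖M₀‖ = 2 / Real.sqrt 3 := by
  apply le_antisymm
  · apply key
    · simp only [Complex.norm_real, norm_neg, Real.norm_eq_abs, sq_abs]
      rw [myc_sq, mys_sq]; norm_num
    · simp only [Complex.norm_real, norm_neg, Real.norm_eq_abs, sq_abs]
      rw [myc_sq, mys_sq]; norm_num
  · have h := Matrix.l2_opNorm_mulVec M₀
      ((EuclideanSpace.equiv (Fin 2) ℂ).symm ![1, -(Real.sqrt 2 : ℂ)])
    have hv : ‖(EuclideanSpace.equiv (Fin 2) ℂ).symm ![(1:ℂ), -(Real.sqrt 2 : ℂ)]‖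
        = Real.sqrt 3 := by
      rw [EuclideanSpace.norm_eq]
      simp [Fin.sum_univ_two, Complex.norm_real, Real.norm_eq_abs, sq_abs,
        abs_of_nonneg (Real.sqrt_nonneg 2)]
      norm_num
    have hmv : M₀.mulVec ((EuclideanSpace.equiv (Fin 2) ℂ).symm ![(1:ℂ), -(Real.sqrt 2 : ℂ)])
        = ![((myc + mys * Real.sqrt 2 : ℝ) : ℂ), ((-(myc * Real.sqrt 2) : ℝ) : ℂ)] := by
      ext i
      fin_cases i <;> simp [M₀, Matrix.mulVec, dotProduct, Fin.sum_univ_two] <;>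
        push_cast <;> ring
    have hn : ‖(EuclideanSpace.equiv (Fin 2) ℂ).symm
        (![((myc + mys * Real.sqrt 2 : ℝ) : ℂ), ((-(myc * Real.sqrt 2) : ℝ) : ℂ)])‖ = 2 := by
      rw [EuclideanSpace.norm_eq]
      have hmyc : (0:ℝ) ≤ myc := le_of_lt myc_pos
      have hmys : (0:ℝ) ≤ mys := le_of_lt mys_pos
      have hsum : (0:ℝ) ≤ myc + mys * Real.sqrt 2 := by positivity
      simp [Fin.sum_univ_two, Complex.norm_real, Real.norm_eq_abs, sq_abs]
      rw [← Complex.ofReal_mul, ← Complex.ofReal_add, Complex.norm_real, Real.norm_eq_abs,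
        abs_of_nonneg hsum, abs_of_nonneg hmyc, abs_of_nonneg (Real.sqrt_nonneg 2)]
      rw [show (myc + mys * Real.sqrt 2)^2 + (myc * Real.sqrt 2)^2 = (4:ℝ) by
        have h2 : Real.sqrt 2 ^ 2 = 2 := Real.sq_sqrt (by norm_num)
        nlinarith [myc_sq, mys_sq, mycs]]
      rw [show (4:ℝ) = 2^2 by norm_num, Real.sqrt_sq (by norm_num)]
    rw [hmv, hv, hn] at h
    rw [div_le_iff₀ (by positivity)]
    linarith

theorem schur_multiplier_norm_two_by_two :
    sSup {c : ℝ | ∃ X : Matrix (Fin 2) (Fin 2) ℂ, ‖X‖ ≤ 1 ∧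
        c = ‖Matrix.hadamard (!![1, 1; 0, 1] : Matrix (Fin 2) (Fin 2) ℂ) X‖} =
      2 / Real.sqrt 3 := by
  apply le_antisymm
  · apply csSup_le
    · exact ⟨2 / Real.sqrt 3, X₀, X₀_norm, by rw [hadamard_X₀, M₀_norm]⟩
    · rintro c ⟨X, hX, rfl⟩
      exact upper X hX
  · apply le_csSup
    · exact ⟨2 / Real.sqrt 3, by rintro c ⟨X, hX, rfl⟩; exact upper X hX⟩
    · exact ⟨X₀, X₀_norm, by rw [hadamard_X₀, M₀_norm]⟩
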